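/- Let α ∈ [0, 2/3) and for integers i ≥ 1 define p_i = (2/4^i)·((2i−2)!/((i−1)!·(i+1)!))·((1−3α/2)i + 1). Then Σ_{i≥1} p_i = 1 − α. -/

import Mathlib

open Filter Finset

/-- `cbq n = centralBinom n / 4^n` as a real number. -/
noncomputable def cbq (n : ℕ) : ℝ := (Nat.centralBinom n : ℝ) / 4 ^ n

lemma cbq_nonneg (n : ℕ) : 0 ≤ cbq n := by
  unfold cbq; positivity

lemma cbq_rec (n : ℕ) :
    ((n : ℝ) + 1) * cbq (n + 1) * 4 = 2 * (2 * n + 1) * cbq n := by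
  have h := Nat.succ_mul_centralBinom_succ n
  have h' : ((n : ℝ) + 1) * (Nat.centralBinom (n + 1) : ℝ)
      = 2 * (2 * (n : ℝ) + 1) * (Nat.centralBinom n : ℝ) := by
    exact_mod_cast congrArg (Nat.cast (R := ℝ)) h
  unfold cbq
  have h4 : (4 : ℝ) ^ (n + 1) = 4 ^ n * 4 := by ring
  have hp : (0 : ℝ) < 4 ^ n := by positivity
  field_simp [h4]
  rw [h4, h']; ring

lemma cbq_eq_succ (n : ℕ) :
    cbq (n + 1) = 2 * (2 * (n : ℝ) + 1) * cbq n / (4 * ((n : ℝ) + 1)) := by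
  have hrec := cbq_rec n
  have hne : (4 : ℝ) * ((n : ℝ) + 1) ≠ 0 := by positivity
  field_simp
  nlinarith [hrec]

lemma cbq_sq_le (n : ℕ) : (cbq n) ^ 2 * ((n : ℝ) + 1) ≤ 1 := by
  induction n with
  | zero => simp [cbq, Nat.centralBinom]
  | succ n ih =>
    rw [cbq_eq_succ]
    have hn : (0 : ℝ) ≤ (n : ℝ) := Nat.cast_nonneg n
    have hcn := cbq_nonneg n
    rw [div_pow, div_mul_eq_mul_div, div_le_one (by positivity)]
    push_cast
    nlinarith [ih, sq_nonneg (cbq n), mul_nonneg (mul_nonneg hcn hcn) hn]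

lemma cbq_le (n : ℕ) : cbq n ≤ 1 / Real.sqrt ((n : ℝ) + 1) := by
  have h1 : (0 : ℝ) < (n : ℝ) + 1 := by positivity
  have hs : 0 < Real.sqrt ((n : ℝ) + 1) := Real.sqrt_pos.mpr h1
  rw [le_div_iff₀ hs]
  have h2 : (cbq n * Real.sqrt ((n : ℝ) + 1)) ^ 2 ≤ 1 ^ 2 := by
    rw [mul_pow, Real.sq_sqrt h1.le, one_pow]
    exact cbq_sq_le n
  have hnn : 0 ≤ cbq n * Real.sqrt ((n : ℝ) + 1) := mul_nonneg (cbq_nonneg n) hs.le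
  nlinarith [h2]

lemma sqrt_succ_tendsto : Tendsto (fun n : ℕ => Real.sqrt ((n : ℝ) + 1)) atTop atTop := by
  have h := (tendsto_rpow_atTop (y := 1 / 2) (by norm_num)).comp
    (tendsto_atTop_add_const_right atTop (1 : ℝ) tendsto_natCast_atTop_atTop)
  simpa [Real.sqrt_eq_rpow, Function.comp_def] using h

lemma one_div_sqrt_succ_tendsto :
    Tendsto (fun n : ℕ => 1 / Real.sqrt ((n : ℝ) + 1)) atTop (nhds 0) := by
  simpa [one_div, Function.comp_def] using tendsto_inv_atTop_zero.comp sqrt_succ_tendsto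

theorem subcritical_pi_sums_to_one_minus_alpha
    (α : ℝ) (hα0 : 0 ≤ α) (hα1 : α < 2 / 3)
    (p : ℕ → ℝ)
    (hp : ∀ i : ℕ, 1 ≤ i →
      p i = 2 / 4 ^ i *
        ((Nat.factorial (2 * i - 2) : ℝ) /
          ((Nat.factorial (i - 1) : ℝ) * (Nat.factorial (i + 1) : ℝ))) *
        ((1 - 3 * α / 2) * (i : ℝ) + 1)) :
    HasSum (fun i : ℕ => p (i + 1)) (1 - α) := by
  -- closed form for partial sums
  have hkey : ∀ N : ℕ, ∑ i ∈ Finset.range N, p (i + 1)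
      = 1 - α + cbq N * (α * (3 * N + 2) / (2 * N + 2) - 1) := by
    intro N
    induction N with
    | zero =>
      have hc0 : cbq 0 = 1 := by simp [cbq, Nat.centralBinom]
      simp only [Finset.range_zero, Finset.sum_empty, Nat.cast_zero, hc0]
      ring
    | succ N ih =>
      rw [Finset.sum_range_succ, ih, hp (N + 1) (by omega)]
      have e1 : 2 * (N + 1) - 2 = 2 * N := by omega
      have e2 : N + 1 - 1 = N := by omega
      rw [e1, e2]
      have hfac : ((2 * N).factorial : ℝ)
          = (Nat.centralBinom N : ℝ) * N.factorial * N.factorial := by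
        have h := Nat.choose_mul_factorial_mul_factorial (show N ≤ 2 * N by omega)
        have h2 : ((2 * N).choose N * N.factorial * N.factorial : ℕ) = (2 * N).factorial := by
          simpa [show 2 * N - N = N by omega] using h
        rw [Nat.centralBinom]
        exact_mod_cast h2.symm
      have hfac2 : ((N + 1 + 1).factorial : ℝ)
          = ((N : ℝ) + 2) * ((N : ℝ) + 1) * N.factorial := by
        rw [Nat.factorial_succ, Nat.factorial_succ]; push_cast; ring
      rw [hfac, hfac2, cbq_eq_succ]
      unfold cbq
      have hN! : (0 : ℝ) < (N.factorial : ℝ) := by exact_mod_cast N.factorial_pos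
      have h4 : (0 : ℝ) < 4 ^ N := by positivity
      have h4' : (4 : ℝ) ^ (N + 1) = 4 ^ N * 4 := by ring
      push_cast
      rw [h4']
      field_simp
      ring
  -- nonnegativity of the terms
  have hβ : 0 < 1 - 3 * α / 2 := by linarith
  have hnonneg : ∀ i : ℕ, 0 ≤ p (i + 1) := by
    intro i
    rw [hp (i + 1) (by omega)]
    have h1 : (0 : ℝ) ≤ (1 - 3 * α / 2) * ((i : ℝ) + 1) + 1 := by
      have : (0 : ℝ) ≤ (i : ℝ) := Nat.cast_nonneg i
      nlinarith
    push_cast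
    positivity
  -- the remainder tends to 0
  have hrem : Tendsto (fun N : ℕ => cbq N * (α * (3 * N + 2) / (2 * N + 2) - 1))
      atTop (nhds 0) := by
    refine squeeze_zero_norm (fun N => ?_) one_div_sqrt_succ_tendsto
    have hc := cbq_nonneg N
    have hcl := cbq_le N
    have hfbound : |α * (3 * (N : ℝ) + 2) / (2 * N + 2) - 1| ≤ 1 := by
      have hN : (0 : ℝ) ≤ (N : ℝ) := Nat.cast_nonneg N
      have hden : (0 : ℝ) < 2 * (N : ℝ) + 2 := by linarith
      have hfrac0 : 0 ≤ α * (3 * (N : ℝ) + 2) / (2 * N + 2) := by positivity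
      have hfrac1 : α * (3 * (N : ℝ) + 2) / (2 * N + 2) ≤ 2 := by
        rw [div_le_iff₀ hden]; nlinarith
      rw [abs_le]; constructor <;> linarith
    calc ‖cbq N * (α * (3 * N + 2) / (2 * N + 2) - 1)‖
        = cbq N * |α * (3 * (N : ℝ) + 2) / (2 * N + 2) - 1| := by
          rw [norm_mul, Real.norm_eq_abs, Real.norm_eq_abs, abs_of_nonneg hc]
      _ ≤ cbq N * 1 := by
          exact mul_le_mul_of_nonneg_left hfbound hc
      _ ≤ 1 / Real.sqrt ((N : ℝ) + 1) := by rw [mul_one]; exact hcl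
  -- conclude
  rw [hasSum_iff_tendsto_nat_of_nonneg hnonneg]
  have : Tendsto (fun N : ℕ => 1 - α + cbq N * (α * (3 * N + 2) / (2 * N + 2) - 1))
      atTop (nhds (1 - α + 0)) := tendsto_const_nhds.add hrem
  rw [add_zero] at this
  exact this.congr fun N => (hkey N).symm
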